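/- For every n ≥ 3 and every nonempty even subgraph J of the wheel W_n, the wheel W_n admits a σ_{J,(4,1)∪(2,3)}-faithful flow, i.e. a modular 5-flow f on W_n with f(e) ∈ (4,1)∪(2,3) for every edge e ∈ J and f(e) ∈ (1,4) for every edge e ∉ J. (Consequently, every graph in the family (W_n, J_{(4,1)∪(2,3)}) has circular flow number strictly less than 5.) -/

import Mathlib

open scoped Classical

/-- A finite multigraph: finite vertex and edge types together with a reference
orientation recorded by source and target maps.  The underlying undirected graph
is obtained by forgetting the directions; reorienting an edge corresponds to
negating the value of a flow on it. -/
structure Multigraph where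
  V : Type
  E : Type
  [fintypeV : Fintype V]
  [fintypeE : Fintype E]
  src : E → V
  tgt : E → V

attribute [instance] Multigraph.fintypeV Multigraph.fintypeE

namespace Multigraph

/-- `f` is a flow with respect to the reference orientation: at every vertex the
sum of the values on incoming edges equals the sum on outgoing edges. -/
def IsFlow (G : Multigraph) {M : Type*} [AddCommMonoid M] (f : G.E → M) : Prop :=
  ∀ v : G.V, (∑ e : G.E, Set.indicator {e' : G.E | G.tgt e' = v} f e)
           = ∑ e : G.E, Set.indicator {e' : G.E | G.src e' = v} f e

/-- The edge `e` joins the vertices `v` and `w` (in either direction). -/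
def Joins (G : Multigraph) (e : G.E) (v w : G.V) : Prop :=
  (G.src e = v ∧ G.tgt e = w) ∨ (G.src e = w ∧ G.tgt e = v)

/-- `v` and `w` are adjacent: some edge joins them. -/
def Adj (G : Multigraph) (v w : G.V) : Prop := ∃ e : G.E, G.Joins e v w

/-- The degree of a vertex (loops count twice). -/
noncomputable def degree (G : Multigraph) (v : G.V) : ℕ :=
  Nat.card {e : G.E // G.src e = v} + Nat.card {e : G.E // G.tgt e = v}

/-- A set of edges is an even subgraph if every vertex is incident with an even
number of its edges (loops counting twice). -/
def IsEvenSubgraph (G : Multigraph) (J : Set G.E) : Prop :=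
  ∀ v : G.V, Even (Nat.card {e : G.E // e ∈ J ∧ G.src e = v}
    + Nat.card {e : G.E // e ∈ J ∧ G.tgt e = v})

/-- `G` has a circular nowhere-zero `r`-flow: for some orientation (encoded by
possibly negating values with respect to the reference orientation) there is a
real-valued flow with all values in `[1, r-1]`. -/
def HasCNZF (G : Multigraph) (r : ℝ) : Prop :=
  ∃ f : G.E → ℝ, G.IsFlow f ∧
    ∀ e : G.E, f e ∈ Set.Icc 1 (r - 1) ∨ -f e ∈ Set.Icc 1 (r - 1)

/-- The circular flow number `Φ_c(G)`, as an extended real (`⊤` if no `r`-CNZF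
exists for any `r ≥ 2`). -/
noncomputable def flowNumber (G : Multigraph) : EReal :=
  sInf {x : EReal | ∃ r : ℝ, x = (r : EReal) ∧ 2 ≤ r ∧ G.HasCNZF r}

/-- `G` has a modular circular nowhere-zero `r`-flow: a flow with values in
`ℝ/rℤ` lying (up to reorientation) in the image of `[1, r-1]`. -/
def HasMCNZF (G : Multigraph) (r : ℝ) : Prop :=
  ∃ f : G.E → AddCircle r, G.IsFlow f ∧
    ∀ e : G.E, f e ∈ (fun t : ℝ => (t : AddCircle r)) '' Set.Icc 1 (r - 1) ∨
      -f e ∈ (fun t : ℝ => (t : AddCircle r)) '' Set.Icc 1 (r - 1)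

/-- `G` has a sub-`r`-MCNZF: an `r`-MCNZF all of whose values lie in the image
of the open interval `(1, r-1)`. -/
def HasSubMCNZF (G : Multigraph) (r : ℝ) : Prop :=
  ∃ f : G.E → AddCircle r, G.IsFlow f ∧
    ∀ e : G.E, f e ∈ (fun t : ℝ => (t : AddCircle r)) '' Set.Ioo 1 (r - 1) ∨
      -f e ∈ (fun t : ℝ => (t : AddCircle r)) '' Set.Ioo 1 (r - 1)

end Multigraph

/-- The right endpoint representative: the representative of `b` in `(a, a+5]`. -/
def arcEnd (a b : ℤ) : ℤ := a + (if (b - a) % 5 = 0 then 5 else (b - a) % 5)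

/-- The open integer arc `(a, b)` in `ℝ/5ℤ`: the image of the real interval
`(a, b')` where `b'` is the representative of `b` in `(a, a+5]`. -/
def arc (a b : ℤ) : Set (AddCircle (5 : ℝ)) :=
  (fun t : ℝ => (t : AddCircle (5 : ℝ))) '' Set.Ioo (a : ℝ) (arcEnd a b : ℝ)

/-- `SI_5`: the symmetric subsets of `ℝ/5ℤ` that are unions of open integer arcs. -/
def SI5 : Set (Set (AddCircle (5 : ℝ))) :=
  {A | (∀ z, z ∈ A ↔ -z ∈ A) ∧ ∃ s : Set (ℤ × ℤ), A = ⋃ p ∈ s, arc p.1 p.2}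

/-- The measure `Me A`: the number of (distinct) open unit arcs contained in `A`. -/
noncomputable def Me (A : Set (AddCircle (5 : ℝ))) : ℕ :=
  Set.ncard {B : Set (AddCircle (5 : ℝ)) | B ⊆ A ∧ ∃ k : ℤ, B = arc k (k + 1)}

namespace Multigraph

/-- `G⁺_{xy}`: the graph `G` with one extra edge `e⁺` from `x` to `y`. -/
def addEdge (G : Multigraph) (x y : G.V) : Multigraph where
  V := G.V
  E := Option G.E
  src := fun e => e.elim x G.src
  tgt := fun e => e.elim y G.tgt

/-- The open 5-capacity of the generalised edge `G_{xy}`: all values that can pass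
from `x` to `y` through `G` by a modular 5-flow of `G⁺_{xy}` whose values on the
edges of `G` lie in the open arc `(1,4)`. -/
def CP5 (G : Multigraph) (x y : G.V) : Set (AddCircle (5 : ℝ)) :=
  {w | ∃ f : Option G.E → AddCircle (5 : ℝ),
    (G.addEdge x y).IsFlow f ∧ (∀ e : G.E, f (some e) ∈ arc 1 4) ∧ f none = w}

/-- `G` has a sub-5-MCNZF: a modular 5-flow with all values in the open arc `(1,4)`. -/
def HasSub5 (G : Multigraph) : Prop :=
  ∃ f : G.E → AddCircle (5 : ℝ), G.IsFlow f ∧ ∀ e : G.E, f e ∈ arc 1 4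

/-- `G` has a `σ`-faithful flow: a modular 5-flow `f` with `f e ∈ σ e` for all `e`. -/
def HasFaithful (G : Multigraph) (σ : G.E → Set (AddCircle (5 : ℝ))) : Prop :=
  ∃ f : G.E → AddCircle (5 : ℝ), G.IsFlow f ∧ ∀ e : G.E, f e ∈ σ e

/-- `G` has a `σ_{J,A}`-faithful flow: a modular 5-flow with values in `A` on the
edges of `J` and in the open arc `(1,4)` on all other edges. -/
def HasFaithfulOn (G : Multigraph) (J : Set G.E) (A : Set (AddCircle (5 : ℝ))) : Prop :=
  ∃ f : G.E → AddCircle (5 : ℝ), G.IsFlow f ∧ (∀ e ∈ J, f e ∈ A) ∧ ∀ e ∉ J, f e ∈ arc 1 4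

end Multigraph

/-- Cyclic successor on `Fin n`. -/
def rot (n : ℕ) (i : Fin n) : Fin n := ⟨(i.val + 1) % n, Nat.mod_lt _ i.pos⟩

/-- The wheel `W_n`: the external cycle `v_1 … v_n` (vertices `some i`, rim edges
`Sum.inl i` from `v_i` to `v_{i+1}`) together with a hub `v_c = none` joined to
every rim vertex by the spokes `Sum.inr i`. -/
def wheel (n : ℕ) : Multigraph where
  V := Option (Fin n)
  E := Fin n ⊕ Fin n
  src := fun e => match e with
    | Sum.inl i => some i
    | Sum.inr _ => none
  tgt := fun e => match e with
    | Sum.inl i => some (rot n i)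
    | Sum.inr i => some i

open Fin.CommRing

namespace WheelFaithful

def In14 (t : ℝ) : Prop := (1 < t ∧ t < 4) ∨ (-4 < t ∧ t < -1)
def InA (t : ℝ) : Prop := (-1 < t ∧ t < 1) ∨ (2 < t ∧ t < 3) ∨ (-3 < t ∧ t < -2)

lemma coe5_shift (t : ℝ) : ((t + 5 : ℝ) : AddCircle (5:ℝ)) = (t : AddCircle (5:ℝ)) := by
  have h : ((t + 5 : ℝ) : AddCircle (5:ℝ)) = (t:AddCircle (5:ℝ)) + ((5:ℝ):AddCircle (5:ℝ)) := rfl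
  rw [h, AddCircle.coe_period (5:ℝ), add_zero]

lemma mem_arc14 {t : ℝ} (h : In14 t) : ((t:ℝ) : AddCircle (5:ℝ)) ∈ arc 1 4 := by
  have he : arcEnd 1 4 = 4 := by norm_num [arcEnd]
  rcases h with ⟨h1,h2⟩|⟨h1,h2⟩
  · exact ⟨t, by rw [he]; constructor <;> norm_num [h1, h2], rfl⟩
  · exact ⟨t+5, by rw [he]; constructor <;> push_cast <;> linarith, coe5_shift t⟩

lemma mem_arcA {t : ℝ} (h : InA t) :
    ((t:ℝ) : AddCircle (5:ℝ)) ∈ arc 4 1 ∪ arc 2 3 := by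
  have h41 : arcEnd 4 1 = 6 := by norm_num [arcEnd]
  have h23 : arcEnd 2 3 = 3 := by norm_num [arcEnd]
  rcases h with ⟨h1,h2⟩|⟨h1,h2⟩|⟨h1,h2⟩
  · exact Or.inl ⟨t+5, by rw [h41]; constructor <;> push_cast <;> linarith, coe5_shift t⟩
  · exact Or.inr ⟨t, by rw [h23]; constructor <;> push_cast <;> linarith, rfl⟩
  · exact Or.inr ⟨t+5, by rw [h23]; constructor <;> push_cast <;> linarith, coe5_shift t⟩

noncomputable def Ftab (e : Prop) (q : ℕ) : ℝ :=
  if e then (if q % 2 = 0 then 0 else 2.5) else (if q % 2 = 0 then 3.4 else 2.2)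

lemma Ftab_mem (e : Prop) (q : ℕ) : (e → InA (Ftab e q)) ∧ (¬ e → In14 (Ftab e q)) := by
  by_cases he : e <;> rcases Nat.mod_two_eq_zero_or_one q with hq | hq <;>
    constructor <;> intro h <;> first
      | tauto
      | (simp only [Ftab, he, hq, if_true, if_false, if_pos, if_neg, not_false_iff]
         norm_num [In14, InA])

lemma step_table (a b : Prop) (r s : ℕ) (hrs : r % 2 ≠ s % 2) :
    ((a ↔ b) → In14 (Ftab b s - Ftab a r)) ∧ (¬(a ↔ b) → InA (Ftab b s - Ftab a r)) := by
  rcases Nat.mod_two_eq_zero_or_one r with hr | hr <;>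
  rcases Nat.mod_two_eq_zero_or_one s with hs | hs <;>
  first
    | exact absurd (hr.trans hs.symm) hrs
    | (by_cases ha : a <;> by_cases hb : b <;> constructor <;> intro h <;>
       first
         | tauto
         | (simp only [Ftab, ha, hb, hr, hs, if_true, if_false, iff_true, iff_false, not_true,
              not_false_iff]
            norm_num [In14, InA]))

section
variable {m : ℕ}

def GoodSeq (ε : Fin (m+1+1) → Prop) (x : Fin (m+1+1) → ℝ) : Prop :=
  (∀ i, (ε i → InA (x i)) ∧ (¬ ε i → In14 (x i))) ∧
  (∀ i, ((ε (i-1) ↔ ε i) → In14 (x i - x (i-1))) ∧ (¬(ε (i-1) ↔ ε i) → InA (x i - x (i-1))))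

lemma val_sub_one (i : Fin (m+1+1)) : (i - 1).val = if i = 0 then m+1 else i.val - 1 :=
  Fin.coe_sub_one i

lemma exists_x_even (hm2 : (m+1+1) % 2 = 0) (ε : Fin (m+1+1) → Prop) :
    ∃ x : Fin (m+1+1) → ℝ, GoodSeq ε x := by
  refine ⟨fun i => Ftab (ε i) i.val, fun i => Ftab_mem _ _, fun i => ?_⟩
  beta_reduce
  apply step_table
  rw [val_sub_one]
  split
  · next h =>
      subst h
      simp only [Fin.val_zero]
      omega
  · next h =>
      have : i.val ≠ 0 := fun hc => h (Fin.ext hc)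
      omega

lemma exists_x_allJ (hm2 : (m+1+1) % 2 = 1) (ε : Fin (m+1+1) → Prop) (hall : ∀ i, ε i) :
    ∃ x : Fin (m+1+1) → ℝ, GoodSeq ε x := by
  refine ⟨fun i => if i.val = 0 then -0.8 else if i.val = 1 then 0.7
    else if i.val % 2 = 0 then 2.5 else 0, fun i => ?_, fun i => ?_⟩
  · constructor
    · intro _
      beta_reduce
      by_cases h0 : i.val = 0 <;> by_cases h1 : i.val = 1 <;>
        rcases Nat.mod_two_eq_zero_or_one i.val with hp | hp <;>
        simp only [h0, h1, hp, if_true, if_false] <;>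
        norm_num [InA]
    · intro h; exact absurd (hall i) h
  · refine ⟨fun _ => ?_, fun h => absurd (iff_of_true (hall (i-1)) (hall i)) h⟩
    beta_reduce
    have hmo : m % 2 = 1 := by omega
    by_cases h0 : i.val = 0
    · have hi0 : i = 0 := Fin.ext h0
      have hv : (i - 1).val = m + 1 := by rw [val_sub_one, if_pos hi0]
      have h2 : ¬ (m+1 = 0) := by omega
      have h3 : ¬ (m+1 = 1) := by omega
      have h4 : (m+1) % 2 = 0 := by omega
      rw [hv]
      simp only [h0, h2, h3, h4, if_true, if_false]
      norm_num [In14]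
    · have hne : i ≠ 0 := fun hc => h0 (by rw [hc]; rfl)
      have hv : (i - 1).val = i.val - 1 := by rw [val_sub_one, if_neg hne]
      have hge : 1 ≤ i.val := by omega
      rw [hv]
      by_cases h1 : i.val = 1
      · simp only [h0, h1, if_false, if_true]
        norm_num [In14]
      · by_cases h2 : i.val = 2
        · have ha : i.val - 1 = 1 := by omega
          have ha0 : ¬ (i.val - 1 = 0) := by omega
          simp only [h0, h1, h2, ha, ha0, if_false, if_true]
          norm_num [In14]
        · have hge3 : 3 ≤ i.val := by omega
          have ha : ¬ (i.val - 1 = 0) := by omega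
          have hb : ¬ (i.val - 1 = 1) := by omega
          rcases Nat.mod_two_eq_zero_or_one i.val with hp | hp
          · have hp' : ¬ ((i.val - 1) % 2 = 0) := by omega
            simp only [h0, h1, hp, ha, hb, hp', if_true, if_false]
            norm_num [In14]
          · have hp0 : (i.val - 1) % 2 = 0 := by omega
            have hpn : ¬ (i.val % 2 = 0) := by omega
            simp only [h0, h1, hpn, ha, hb, hp0, if_true, if_false]
            norm_num [In14]

lemma exists_x_bdry (hm2 : (m+1+1) % 2 = 1) (ε : Fin (m+1+1) → Prop)
    (b : Fin (m+1+1)) (hb : ε b) (hb' : ¬ ε (b - 1)) :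
    ∃ x : Fin (m+1+1) → ℝ, GoodSeq ε x := by
  have h10 : (1 : Fin (m+1+1)) ≠ 0 := by
    intro h
    have := congrArg Fin.val h
    simp [Fin.val_one'] at this
  refine ⟨fun j => if j = b then (if ε (b+1) then 0.7 else 2.7) else Ftab (ε j) ((j - b).val),
    fun j => ?_, fun j => ?_⟩
  · beta_reduce
    by_cases hj : j = b
    · rw [hj, if_pos rfl]
      refine ⟨fun _ => ?_, fun h => absurd hb h⟩
      by_cases hb1 : ε (b+1) <;> simp only [hb1, if_true, if_false] <;> norm_num [InA]
    · rw [if_neg hj]; exact Ftab_mem _ _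
  · beta_reduce
    by_cases hj : j = b
    · rw [hj]
      have hneq : b - 1 ≠ b := fun h => h10 (sub_eq_self.mp h)
      rw [if_pos rfl, if_neg hneq]
      have hd : (b - 1 - b) = -1 := by ring
      have hdv : ((-1 : Fin (m+1+1))).val = m+1 := by
        have h01 : (-1 : Fin (m+1+1)) = 0 - 1 := by ring
        rw [h01, Fin.coe_sub_one, if_pos rfl]
      rw [hd, hdv]
      have hpar : (m+1) % 2 = 0 := by omega
      refine ⟨fun h => absurd h (by tauto), fun _ => ?_⟩
      simp only [Ftab, hb', hpar, if_true, if_false]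
      by_cases hb1 : ε (b+1) <;> simp only [hb1, if_true, if_false] <;> norm_num [InA]
    · by_cases hj1 : j = b + 1
      · rw [hj1]
        have hne : b + 1 ≠ b := fun h => h10 (by
          have h2 : b + 1 - b = b - b := by rw [h]
          simpa using h2)
        have hprev : b + 1 - 1 = b := by ring
        rw [if_neg hne, hprev, if_pos rfl]
        have hd : (b + 1 - b) = 1 := by ring
        have hdv : ((1 : Fin (m+1+1))).val = 1 := Fin.val_one m
        rw [hd, hdv]
        by_cases hb1 : ε (b + 1)
        · refine ⟨fun _ => ?_, fun h => absurd (iff_of_true hb hb1) h⟩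
          simp only [Ftab, hb1, if_true, if_false]
          norm_num [In14]
        · refine ⟨fun h => absurd h (by tauto), fun _ => ?_⟩
          simp only [Ftab, hb1, if_true, if_false]
          norm_num [InA]
      · have hj1' : j - 1 ≠ b := fun h => hj1 (by rw [← h]; ring)
        rw [if_neg hj, if_neg hj1']
        have hrw : j - 1 - b = (j - b) - 1 := by ring
        have hd0 : j - b ≠ 0 := fun h => hj (sub_eq_zero.mp h)
        have hdv : (j - 1 - b).val = (j - b).val - 1 := by
          rw [hrw, Fin.coe_sub_one, if_neg hd0]
        have hne0 : (j - b).val ≠ 0 := fun h => hd0 (Fin.ext h)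
        rw [hdv]
        apply step_table
        omega
end

lemma rot_eq {m : ℕ} (j : Fin (m+1+1)) : rot (m+1+1) j = j + 1 := by
  apply Fin.ext
  simp [rot, Fin.add_def, Fin.val_one']

lemma ncard_inter_single {β : Type} (J : Set β) (a : β) :
    (J ∩ {a}).ncard = if a ∈ J then 1 else 0 := by
  by_cases h : a ∈ J
  · rw [if_pos h]
    have he : J ∩ {a} = {a} := by ext y; aesop
    rw [he, Set.ncard_singleton]
  · rw [if_neg h]
    have he : J ∩ {a} = ∅ := by ext y; aesop
    rw [he, Set.ncard_empty]

lemma ncard_inter_pair {β : Type} (J : Set β) {a b : β} (hab : a ≠ b) :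
    (J ∩ {a, b}).ncard = (if a ∈ J then 1 else 0) + (if b ∈ J then 1 else 0) := by
  by_cases ha : a ∈ J <;> by_cases hb : b ∈ J
  · have he : J ∩ {a, b} = {a, b} := by ext y; aesop
    rw [he, Set.ncard_pair hab]; simp [ha, hb]
  · have he : J ∩ {a, b} = {a} := by ext y; aesop
    rw [he, Set.ncard_singleton]; simp [ha, hb]
  · have he : J ∩ {a, b} = {b} := by ext y; aesop
    rw [he, Set.ncard_singleton]; simp [ha, hb]
  · have he : J ∩ {a, b} = ∅ := by ext y; aesop
    rw [he, Set.ncard_empty]; simp [ha, hb]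

lemma spoke_parity {m : ℕ} (J : Set ((wheel (m+1+1)).E))
    (hJ : (wheel (m+1+1)).IsEvenSubgraph J) (i : Fin (m+1+1)) :
    Sum.inr i ∈ J ↔ ¬ (Sum.inl (i-1) ∈ J ↔ Sum.inl i ∈ J) := by
  have h := hJ (some i)
  have c1 : Nat.card {e : (wheel (m+1+1)).E // e ∈ J ∧ (wheel (m+1+1)).src e = some i}
      = (if (Sum.inl i : Fin (m+1+1) ⊕ Fin (m+1+1)) ∈ J then 1 else 0) := by
    refine Eq.trans ?_ ((Nat.card_coe_set_eq _).trans (ncard_inter_single J (Sum.inl i)))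
    apply Nat.card_congr
    apply Equiv.subtypeEquivRight
    intro e
    match e with
    | Sum.inl j =>
        constructor
        · rintro ⟨h1, h2⟩
          have : j = i := Option.some_injective _ h2
          subst this
          exact ⟨h1, rfl⟩
        · rintro ⟨h1, h2⟩
          have : j = i := Sum.inl.inj h2
          subst this
          exact ⟨h1, rfl⟩
    | Sum.inr j =>
        constructor
        · rintro ⟨h1, h2⟩
          exact absurd h2 (by simp [wheel])
        · rintro ⟨h1, h2⟩
          exact absurd h2 Sum.inr_ne_inl
  have c2 : Nat.card {e : (wheel (m+1+1)).E // e ∈ J ∧ (wheel (m+1+1)).tgt e = some i}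
      = (if (Sum.inl (i-1) : Fin (m+1+1) ⊕ Fin (m+1+1)) ∈ J then 1 else 0)
        + (if (Sum.inr i : Fin (m+1+1) ⊕ Fin (m+1+1)) ∈ J then 1 else 0) := by
    refine Eq.trans ?_ ((Nat.card_coe_set_eq _).trans
      (ncard_inter_pair J (show (Sum.inl (i-1) : Fin (m+1+1) ⊕ Fin (m+1+1)) ≠ Sum.inr i by simp)))
    apply Nat.card_congr
    apply Equiv.subtypeEquivRight
    intro e
    match e with
    | Sum.inl j =>
        constructor
        · rintro ⟨h1, h2⟩
          have h3 : rot (m+1+1) j = i := Option.some_injective _ h2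
          rw [rot_eq] at h3
          have : j = i - 1 := eq_sub_of_add_eq h3
          subst this
          exact ⟨h1, Or.inl rfl⟩
        · rintro ⟨h1, h2⟩
          have : j = i - 1 := by
            rcases h2 with h2 | h2
            · exact Sum.inl.inj h2
            · exact absurd h2 Sum.inl_ne_inr
          subst this
          refine ⟨h1, ?_⟩
          show some (rot (m+1+1) (i-1)) = some i
          rw [rot_eq, sub_add_cancel]
    | Sum.inr j =>
        constructor
        · rintro ⟨h1, h2⟩
          have : j = i := Option.some_injective _ h2
          subst this
          exact ⟨h1, Or.inr rfl⟩
        · rintro ⟨h1, h2⟩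
          have : j = i := by
            rcases h2 with h2 | h2
            · simp at h2
            · exact Sum.inr.inj h2
          subst this
          exact ⟨h1, rfl⟩
  rw [c1, c2, Nat.even_iff] at h
  by_cases hP : (Sum.inl i : Fin (m+1+1) ⊕ Fin (m+1+1)) ∈ J <;>
  by_cases hQ : (Sum.inl (i-1) : Fin (m+1+1) ⊕ Fin (m+1+1)) ∈ J <;>
  by_cases hR : (Sum.inr i : Fin (m+1+1) ⊕ Fin (m+1+1)) ∈ J <;>
  simp only [hP, hQ, hR, if_true, if_false] at h <;>
  first
    | tauto
    | (exfalso; omega)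

lemma coe5_add (a b : ℝ) : ((a + b : ℝ) : AddCircle (5:ℝ)) = (a : AddCircle (5:ℝ)) + (b : ℝ) := rfl

lemma sum_ind_single {α β : Type} [Fintype α] [DecidableEq α] (g : β → AddCircle (5:ℝ))
    (c : α → β) (S : Set β) (a : α) (h : ∀ b, c b ∈ S ↔ b = a) :
    ∑ j : α, S.indicator g (c j) = g (c a) := by
  have h1 : ∀ j : α, S.indicator g (c j) = if j = a then g (c j) else 0 := by
    intro j
    rw [Set.indicator_apply, if_congr (h j) rfl rfl]
  rw [Finset.sum_congr rfl (fun j _ => h1 j), Finset.sum_ite_eq' Finset.univ a]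
  simp

lemma sum_ind_zero {α β : Type} [Fintype α] (g : β → AddCircle (5:ℝ))
    (c : α → β) (S : Set β) (h : ∀ b, c b ∉ S) : ∑ j : α, S.indicator g (c j) = 0 := by
  apply Finset.sum_eq_zero
  intro j _
  exact Set.indicator_of_notMem (h j) g

section
variable {m : ℕ}

lemma wheel_isFlow (x : Fin (m+1+1) → ℝ) :
    (wheel (m+1+1)).IsFlow (Sum.elim (fun i => ((x i : ℝ) : AddCircle (5:ℝ)))
      (fun i => ((x i - x (i-1) : ℝ) : AddCircle (5:ℝ)))) := by
  intro v
  have key : ∀ (g : (wheel (m+1+1)).E → AddCircle (5:ℝ)) (S : Set (wheel (m+1+1)).E),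
      ∑ e : (wheel (m+1+1)).E, S.indicator g e
        = ∑ j : Fin (m+1+1), S.indicator g (.inl j)
          + ∑ j : Fin (m+1+1), S.indicator g (.inr j) :=
    fun g S => Fintype.sum_sum_type _
  erw [key, key]
  match v with
  | none =>
      erw [sum_ind_zero _ _ _ (fun b => by show ¬ (some (rot _ b) = none); simp),
          sum_ind_zero _ _ _ (fun b => by show ¬ (some b = none); simp),
          sum_ind_zero _ _ _ (fun b => by show ¬ (some b = none); simp)]
      have h4 : ∑ j : Fin (m+1+1), ({e' : (wheel (m+1+1)).E | (wheel (m+1+1)).src e' = none}).indicator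
          (Sum.elim (fun i => ((x i : ℝ) : AddCircle (5:ℝ)))
            (fun i => ((x i - x (i-1) : ℝ) : AddCircle (5:ℝ)))) (.inr j)
          = ∑ j : Fin (m+1+1), ((x j - x (j-1) : ℝ) : AddCircle (5:ℝ)) := by
        apply Finset.sum_congr rfl
        intro j _
        erw [Set.indicator_of_mem
          (show Sum.inr j ∈ {e' : (wheel (m+1+1)).E | (wheel (m+1+1)).src e' = none} from rfl)]
        rfl
      erw [h4]
      have hsum : ∑ j : Fin (m+1+1), ((x j - x (j-1) : ℝ) : AddCircle (5:ℝ))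
          = ((∑ j : Fin (m+1+1), (x j - x (j-1)) : ℝ) : AddCircle (5:ℝ)) :=
        (map_sum (QuotientAddGroup.mk' (AddSubgroup.zmultiples (5:ℝ)))
          (fun j => x j - x (j-1)) Finset.univ).symm
      rw [hsum]
      have hz : ∑ j : Fin (m+1+1), (x j - x (j-1)) = 0 := by
        rw [Finset.sum_sub_distrib,
          Fintype.sum_equiv (Equiv.subRight (1 : Fin (m+1+1))) (fun j => x (j - 1)) x (fun j => rfl)]
        ring
      rw [hz]
      rfl
  | some i =>
      erw [sum_ind_single _ _ _ (i-1) (fun b => by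
            show some (rot _ b) = some i ↔ b = i - 1
            rw [rot_eq]
            constructor
            · intro h; exact eq_sub_of_add_eq (Option.some_injective _ h)
            · intro h; subst h; rw [sub_add_cancel]),
          sum_ind_single _ _ _ i (fun b => by show some b = some i ↔ b = i; simp),
          sum_ind_single _ _ _ i (fun b => by show some b = some i ↔ b = i; simp),
          sum_ind_zero _ _ _ (fun b => by show ¬ (none = some i); simp)]
      show ((x (i-1) : ℝ) : AddCircle (5:ℝ)) + ((x i - x (i-1) : ℝ) : AddCircle (5:ℝ))
          = ((x i : ℝ) : AddCircle (5:ℝ)) + 0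
      rw [add_zero, ← coe5_add]
      congr 1
      ring
end


end WheelFaithful

/-- for every `n ≥ 3` and every nonempty even subgraph `J` of the
wheel `W_n`, the wheel admits a `σ_{J,(4,1)∪(2,3)}`-faithful flow. -/
theorem wheel_41_23_hasFaithful (n : ℕ) (hn : 3 ≤ n)
    (J : Set (wheel n).E) (hJ : (wheel n).IsEvenSubgraph J) (hJne : J.Nonempty) :
    (wheel n).HasFaithfulOn J (arc 4 1 ∪ arc 2 3) := by
  classical
  obtain ⟨m, rfl⟩ : ∃ m, n = m + 1 + 1 := ⟨n - 2, by omega⟩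
  have hE : ∀ i : Fin (m+1+1), Sum.inr i ∈ J ↔ ¬ (Sum.inl (i-1) ∈ J ↔ Sum.inl i ∈ J) :=
    WheelFaithful.spoke_parity J hJ
  have hex : ∃ i : Fin (m+1+1), Sum.inl i ∈ J := by
    obtain ⟨e, he⟩ := hJne
    match e with
    | Sum.inl i => exact ⟨i, he⟩
    | Sum.inr i =>
        have hni := (hE i).mp he
        by_cases h1 : Sum.inl i ∈ J
        · exact ⟨i, h1⟩
        · by_cases h2 : Sum.inl (i-1) ∈ J
          · exact ⟨i-1, h2⟩
          · exact absurd (iff_of_false h2 h1) hni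
  have hx : ∃ x : Fin (m+1+1) → ℝ,
      WheelFaithful.GoodSeq (fun i => Sum.inl i ∈ J) x := by
    rcases Nat.even_or_odd (m+1+1) with hev | hodd
    · exact WheelFaithful.exists_x_even (Nat.even_iff.mp hev) _
    · by_cases hall : ∀ i : Fin (m+1+1), Sum.inl i ∈ J
      · exact WheelFaithful.exists_x_allJ (Nat.odd_iff.mp hodd) _ hall
      · have hbd : ∃ b : Fin (m+1+1), Sum.inl b ∈ J ∧ Sum.inl (b - 1) ∉ J := by
          by_contra hc
          push_neg at hc
          obtain ⟨i1, hi1⟩ := hex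
          have hk : ∀ k : ℕ, Sum.inl (i1 - (k : Fin (m+1+1))) ∈ J := by
            intro k
            induction k with
            | zero => simpa using hi1
            | succ k ih =>
                have h2 := hc _ ih
                have heq : i1 - ((k+1 : ℕ) : Fin (m+1+1)) = i1 - (k : Fin (m+1+1)) - 1 := by
                  push_cast
                  ring
                rw [heq]
                exact h2
          apply hall
          intro j
          have hj := hk ((i1 - j).val)
          rwa [Fin.cast_val_eq_self, sub_sub_cancel] at hj
        obtain ⟨b, hb1, hb2⟩ := hbd
        exact WheelFaithful.exists_x_bdry (Nat.odd_iff.mp hodd) _ b hb1 hb2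
  obtain ⟨x, hx1, hx2⟩ := hx
  refine ⟨Sum.elim (fun i => ((x i : ℝ) : AddCircle (5:ℝ)))
      (fun i => ((x i - x (i-1) : ℝ) : AddCircle (5:ℝ))), WheelFaithful.wheel_isFlow x, ?_, ?_⟩
  · intro e he
    match e with
    | Sum.inl i => exact WheelFaithful.mem_arcA ((hx1 i).1 he)
    | Sum.inr i => exact WheelFaithful.mem_arcA ((hx2 i).2 ((hE i).mp he))
  · intro e he
    match e with
    | Sum.inl i => exact WheelFaithful.mem_arc14 ((hx1 i).2 he)
    | Sum.inr i =>
        have hiff : (Sum.inl (i-1) ∈ J ↔ Sum.inl i ∈ J) := by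
          by_contra hcc
          exact he ((hE i).mpr hcc)
        exact WheelFaithful.mem_arc14 ((hx2 i).1 hiff)
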